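/- For every z in the open unit disk and every α > 0, (1/(2π)) ∫₀^{2π} dθ / |1 - z e^{iθ}|^{2α} = Σ_{k=0}^∞ (Γ(k+α)/(k!·Γ(α)))² |z|^{2k}. -/

import Mathlib

open MeasureTheory Complex Filter
set_option maxHeartbeats 1000000

lemma gamma_prod (α : ℝ) (hα : 0 < α) (n : ℕ) :
    ∏ i ∈ Finset.range n, (α + i) = Real.Gamma (n + α) / Real.Gamma α := by
  have hΓ : Real.Gamma α ≠ 0 := (Real.Gamma_pos_of_pos hα).ne'
  induction n with
  | zero => simp [div_self hΓ]
  | succ n ih =>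
    rw [Finset.prod_range_succ, ih]
    have h1 : Real.Gamma ((n : ℝ) + α + 1) = ((n : ℝ) + α) * Real.Gamma ((n : ℝ) + α) :=
      Real.Gamma_add_one (by positivity)
    push_cast
    rw [show (n : ℝ) + 1 + α = (n : ℝ) + α + 1 by ring, h1]
    field_simp
    ring

lemma iterDeriv (α : ℝ) (n : ℕ) : ∀ w : ℂ, w.re < 1 →
    iteratedDeriv n (fun w : ℂ => (1 - w) ^ (-(α:ℂ))) w
      = ((∏ i ∈ Finset.range n, (α + i) : ℝ) : ℂ) * (1 - w) ^ (-(α:ℂ) - n) := by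
  induction n with
  | zero => intro w hw; simp [iteratedDeriv_zero]
  | succ n ih =>
    intro w hw
    have hU : IsOpen {w : ℂ | w.re < 1} := isOpen_lt Complex.continuous_re continuous_const
    have hev : iteratedDeriv n (fun w : ℂ => (1 - w) ^ (-(α:ℂ)))
        =ᶠ[nhds w] fun w : ℂ =>
          ((∏ i ∈ Finset.range n, (α + i) : ℝ) : ℂ) * (1 - w) ^ (-(α:ℂ) - n) :=
      Filter.eventuallyEq_of_mem (hU.mem_nhds hw) (fun x hx => ih x hx)
    rw [iteratedDeriv_succ, hev.deriv_eq]
    have hslit : (1 - w) ∈ Complex.slitPlane := by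
      refine Complex.mem_slitPlane_iff.2 (Or.inl ?_)
      simpa using hw
    have hd : HasDerivAt (fun w : ℂ => (1 - w) ^ (-(α:ℂ) - n))
        ((-(α:ℂ) - n) * (1 - w) ^ (-(α:ℂ) - n - 1) * (-1)) w :=
      ((hasDerivAt_id w).const_sub 1).cpow_const hslit
    rw [((hd.const_mul _).deriv)]
    rw [Finset.prod_range_succ]
    push_cast
    rw [show (-(α:ℂ) - n - 1) = (-(α:ℂ) - (n + 1)) by ring]
    ring

lemma hasSum_binom (α : ℝ) (hα : 0 < α) {w : ℂ} (hw : ‖w‖ < 1) :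
    HasSum (fun n : ℕ => ((Real.Gamma (n + α) / (n.factorial * Real.Gamma α) : ℝ) : ℂ) * w ^ n)
      ((1 - w) ^ (-(α:ℂ))) := by
  have hdiff : DifferentiableOn ℂ (fun w : ℂ => (1 - w) ^ (-(α:ℂ))) (Metric.ball 0 1) := by
    intro x hx
    have hx1 : x.re < 1 := lt_of_le_of_lt (Complex.re_le_norm x) (by simpa using hx)
    have hslit : (1 - x) ∈ Complex.slitPlane := by
      refine Complex.mem_slitPlane_iff.2 (Or.inl ?_)
      simpa using hx1
    exact (((hasDerivAt_id x).const_sub 1).cpow_const hslit).differentiableAt.differentiableWithinAt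
  have H := Complex.hasSum_taylorSeries_on_ball hdiff (by simpa using hw)
  have hΓ : Real.Gamma α ≠ 0 := (Real.Gamma_pos_of_pos hα).ne'
  convert H using 2 with n
  · rfl
  rw [iterDeriv α n 0 (by norm_num)]
  have h1 : ((1:ℂ) - 0) ^ (-(α:ℂ) - n) = 1 := by
    rw [sub_zero, Complex.one_cpow]
  rw [h1, mul_one, sub_zero, smul_eq_mul, smul_eq_mul]
  rw [gamma_prod α hα n]
  have hΓ' : Real.Gamma α ≠ 0 := (Real.Gamma_pos_of_pos hα).ne'
  have hfac : ((n.factorial : ℝ)) ≠ 0 := Nat.cast_ne_zero.2 n.factorial_ne_zero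
  push_cast
  field_simp

lemma summable_c (α : ℝ) (hα : 0 < α) {s : ℝ} (h0 : 0 ≤ s) (h1 : s < 1) :
    Summable (fun n : ℕ => Real.Gamma (n + α) / (n.factorial * Real.Gamma α) * s ^ n) := by
  have hw : ‖(s : ℂ)‖ < 1 := by
    rw [Complex.norm_real, Real.norm_eq_abs]; rwa [_root_.abs_of_nonneg h0]
  have H := (hasSum_binom α hα hw).summable
  rw [← Complex.summable_ofReal]
  refine H.congr fun n => ?_
  push_cast
  ring

lemma int_exp (j k : ℕ) :
    (∫ θ in Set.Ioc (0:ℝ) (2*Real.pi), Complex.exp ((((j:ℂ) - k) * Complex.I) * θ))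
      = if j = k then ((2*Real.pi : ℝ) : ℂ) else 0 := by
  have h2π : (0:ℝ) ≤ 2*Real.pi := by positivity
  rw [← intervalIntegral.integral_of_le h2π]
  by_cases hjk : j = k
  · subst hjk
    simp only [sub_self, zero_mul, Complex.exp_zero]
    simp [if_pos rfl]
  · have hne : ((j:ℂ) - k) ≠ 0 := by
      rw [sub_ne_zero]
      exact_mod_cast hjk
    have hc : ((j:ℂ) - k) * Complex.I ≠ 0 := mul_ne_zero hne Complex.I_ne_zero
    rw [integral_exp_mul_complex hc, if_neg hjk]
    have he : Complex.exp ((((j:ℂ) - k) * Complex.I) * (2*Real.pi : ℝ))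
        = 1 := by
      rw [show ((((j:ℂ) - k) * Complex.I) * (2*Real.pi : ℝ)) = (((j:ℤ) - (k:ℤ) : ℤ) : ℂ) * (2*Real.pi*Complex.I) by push_cast; ring]
      exact Complex.exp_int_mul_two_pi_mul_I _
    rw [he]
    simp

theorem stmt2 (z : ℂ) (hz : z ∈ Metric.ball (0 : ℂ) 1) (α : ℝ) (hα : 0 < α) :
    (1 / (2 * Real.pi)) * ∫ θ in (0:ℝ)..(2 * Real.pi),
        1 / ‖1 - z * Complex.exp (θ * Complex.I)‖ ^ (2 * α)
      = ∑' k : ℕ, (Real.Gamma (k + α) / (Nat.factorial k * Real.Gamma α)) ^ 2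
          * ‖z‖ ^ (2 * k) := by
  have hz1 : ‖z‖ < 1 := by simpa using hz
  obtain ⟨c, hc⟩ : ∃ c : ℕ → ℝ, c = fun n : ℕ => Real.Gamma (n + α) / (n.factorial * Real.Gamma α) :=
    ⟨_, rfl⟩
  have hcpos : ∀ n, 0 < c n := fun n => by
    rw [hc]
    exact div_pos (Real.Gamma_pos_of_pos (by positivity)) (by positivity)
  obtain ⟨a, ha⟩ : ∃ a : ℕ → ℂ, a = fun k : ℕ => ((c k : ℝ) : ℂ) * z ^ k := ⟨_, rfl⟩
  have hna : ∀ k, ‖a k‖ = c k * ‖z‖ ^ k := fun k => by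
    rw [ha]
    dsimp only
    simp [norm_mul, norm_pow, Complex.norm_real, Real.norm_eq_abs, _root_.abs_of_pos (hcpos k)]
  have hsum0 : Summable (fun k => c k * ‖z‖ ^ k) := by
    rw [hc]; exact summable_c α hα (norm_nonneg z) hz1
  have hasum : Summable (fun k => ‖a k‖) := hsum0.congr fun k => (hna k).symm
  obtain ⟨g, hg⟩ : ∃ g : ℝ → ℂ, g = fun θ : ℝ =>
    (1 - z * Complex.exp ((θ:ℂ) * Complex.I)) ^ (-(α:ℂ)) := ⟨_, rfl⟩
  have hwlt : ∀ θ : ℝ, ‖z * Complex.exp ((θ:ℂ) * Complex.I)‖ < 1 := fun θ => by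
    rw [norm_mul, Complex.norm_exp_ofReal_mul_I, mul_one]; exact hz1
  have hgsum : ∀ θ : ℝ, HasSum (fun k : ℕ => a k * Complex.exp ((k:ℂ) * θ * Complex.I)) (g θ) := by
    intro θ
    have H := hasSum_binom α hα (hwlt θ)
    have hterm : ∀ k : ℕ, ((Real.Gamma (k + α) / (k.factorial * Real.Gamma α) : ℝ) : ℂ)
          * (z * Complex.exp ((θ:ℂ) * Complex.I)) ^ k
        = a k * Complex.exp ((k:ℂ) * θ * Complex.I) := by
      intro k
      rw [mul_pow, ← Complex.exp_nat_mul, ha, hc, mul_assoc, mul_assoc]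
    rw [hg]
    simpa only [hterm] using H
  have hgsumc : ∀ θ : ℝ, HasSum
      (fun k : ℕ => (starRingEnd ℂ) (a k * Complex.exp ((k:ℂ) * θ * Complex.I)))
      ((starRingEnd ℂ) (g θ)) := by
    intro θ
    simpa only [RCLike.star_def] using (hgsum θ).star
  have hnt : ∀ (θ : ℝ) (k : ℕ), ‖a k * Complex.exp ((k:ℂ) * θ * Complex.I)‖ = ‖a k‖ := by
    intro θ k
    rw [norm_mul, show ((k:ℂ) * θ * Complex.I) = (((k * θ : ℝ)):ℂ) * Complex.I by push_cast; ring,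
      Complex.norm_exp_ofReal_mul_I, mul_one]
  have hFnorm : ∀ (p : ℕ × ℕ) (θ : ℝ), ‖(a p.1 * Complex.exp ((p.1:ℂ) * θ * Complex.I)) *
      (starRingEnd ℂ) (a p.2 * Complex.exp ((p.2:ℂ) * θ * Complex.I))‖ = ‖a p.1‖ * ‖a p.2‖ := by
    intro p θ
    rw [norm_mul, RCLike.norm_conj, hnt, hnt]
  have hFsum : ∀ θ : ℝ, HasSum (fun p : ℕ × ℕ =>
      (a p.1 * Complex.exp ((p.1:ℂ) * θ * Complex.I)) *
        (starRingEnd ℂ) (a p.2 * Complex.exp ((p.2:ℂ) * θ * Complex.I)))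
      (g θ * (starRingEnd ℂ) (g θ)) := by
    intro θ
    have h1 : Summable fun k : ℕ => ‖a k * Complex.exp ((k:ℂ) * θ * Complex.I)‖ :=
      hasum.congr fun k => (hnt θ k).symm
    have h2 : Summable fun k : ℕ =>
        ‖(starRingEnd ℂ) (a k * Complex.exp ((k:ℂ) * θ * Complex.I))‖ :=
      hasum.congr fun k => by rw [RCLike.norm_conj, hnt]
    exact HasSum.mul (f := fun k : ℕ => a k * Complex.exp ((k:ℂ) * θ * Complex.I))
      (g := fun k : ℕ => (starRingEnd ℂ) (a k * Complex.exp ((k:ℂ) * θ * Complex.I)))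
      (hgsum θ) (hgsumc θ) (summable_mul_of_summable_norm (R := ℂ)
        (f := fun k : ℕ => a k * Complex.exp ((k:ℂ) * θ * Complex.I))
        (g := fun k : ℕ => (starRingEnd ℂ) (a k * Complex.exp ((k:ℂ) * θ * Complex.I))) h1 h2)
  -- integral of each term
  have h2π : (0:ℝ) ≤ 2 * Real.pi := by positivity
  have hintF : ∀ p : ℕ × ℕ, (∫ θ in Set.Ioc (0:ℝ) (2*Real.pi),
      (a p.1 * Complex.exp ((p.1:ℂ) * θ * Complex.I)) *
        (starRingEnd ℂ) (a p.2 * Complex.exp ((p.2:ℂ) * θ * Complex.I)))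
      = if p.1 = p.2 then ((2*Real.pi : ℝ) : ℂ) * (a p.1 * (starRingEnd ℂ) (a p.1)) else 0 := by
    rintro ⟨j, k⟩
    have hFe : ∀ θ : ℝ, (a j * Complex.exp ((j:ℂ) * θ * Complex.I)) *
          (starRingEnd ℂ) (a k * Complex.exp ((k:ℂ) * θ * Complex.I))
        = (a j * (starRingEnd ℂ) (a k)) * Complex.exp ((((j:ℂ) - k) * Complex.I) * θ) := by
      intro θ
      have h1 : (starRingEnd ℂ) (Complex.exp ((k:ℂ) * θ * Complex.I))
          = Complex.exp (-((k:ℂ) * θ * Complex.I)) := by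
        rw [← Complex.exp_conj]
        congr 1
        simp only [map_mul, Complex.conj_I, Complex.conj_natCast, Complex.conj_ofReal]
        ring
      rw [map_mul, h1,
        show ((((j:ℂ) - k) * Complex.I) * θ)
          = (j:ℂ) * θ * Complex.I + -((k:ℂ) * θ * Complex.I) from by ring,
        Complex.exp_add]
      ring
    calc (∫ θ in Set.Ioc (0:ℝ) (2*Real.pi), (a j * Complex.exp ((j:ℂ) * θ * Complex.I)) *
          (starRingEnd ℂ) (a k * Complex.exp ((k:ℂ) * θ * Complex.I)))
        = ∫ θ in Set.Ioc (0:ℝ) (2*Real.pi),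
            (a j * (starRingEnd ℂ) (a k)) * Complex.exp ((((j:ℂ) - k) * Complex.I) * θ) := by
          exact integral_congr_ae (Filter.Eventually.of_forall fun θ => hFe θ)
      _ = (a j * (starRingEnd ℂ) (a k)) *
            ∫ θ in Set.Ioc (0:ℝ) (2*Real.pi), Complex.exp ((((j:ℂ) - k) * Complex.I) * θ) :=
          MeasureTheory.integral_const_mul _ _
      _ = if j = k then ((2*Real.pi : ℝ) : ℂ) * (a j * (starRingEnd ℂ) (a j)) else 0 := by
          rw [int_exp j k]
          split_ifs with h
          · subst h; ring
          · rw [mul_zero]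
  have hmeas : ∀ p : ℕ × ℕ, AEStronglyMeasurable (fun θ : ℝ =>
      (a p.1 * Complex.exp ((p.1:ℂ) * θ * Complex.I)) *
        (starRingEnd ℂ) (a p.2 * Complex.exp ((p.2:ℂ) * θ * Complex.I)))
      (volume.restrict (Set.Ioc (0:ℝ) (2*Real.pi))) := by
    intro p
    apply Continuous.aestronglyMeasurable
    refine Continuous.mul (by fun_prop) ?_
    have : Continuous (fun w : ℂ => (starRingEnd ℂ) w) := Complex.continuous_conj
    exact this.comp (by fun_prop)
  have hlint : ∑' p : ℕ × ℕ, ∫⁻ θ in Set.Ioc (0:ℝ) (2*Real.pi),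
      ‖(a p.1 * Complex.exp ((p.1:ℂ) * θ * Complex.I)) *
        (starRingEnd ℂ) (a p.2 * Complex.exp ((p.2:ℂ) * θ * Complex.I))‖₊ ≠ ⊤ := by
    have h1 : ∀ p : ℕ × ℕ, (∫⁻ θ in Set.Ioc (0:ℝ) (2*Real.pi),
        ‖(a p.1 * Complex.exp ((p.1:ℂ) * θ * Complex.I)) *
          (starRingEnd ℂ) (a p.2 * Complex.exp ((p.2:ℂ) * θ * Complex.I))‖₊)
        = ((‖a p.1‖₊ * ‖a p.2‖₊ : NNReal) : ENNReal) * ENNReal.ofReal (2*Real.pi) := by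
      intro p
      have : ∀ θ : ℝ, (‖(a p.1 * Complex.exp ((p.1:ℂ) * θ * Complex.I)) * (starRingEnd ℂ) (a p.2 * Complex.exp ((p.2:ℂ) * θ * Complex.I))‖₊ : ENNReal) = ((‖a p.1‖₊ * ‖a p.2‖₊ : NNReal) : ENNReal) := by
        intro θ
        congr 1
        ext
        simpa using hFnorm p θ
      rw [lintegral_congr this, MeasureTheory.lintegral_const, Measure.restrict_apply_univ,
        Real.volume_Ioc]
      norm_num
    rw [tsum_congr h1, ENNReal.tsum_mul_right]
    refine ENNReal.mul_ne_top ?_ ENNReal.ofReal_ne_top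
    rw [ENNReal.tsum_coe_ne_top_iff_summable]
    rw [← NNReal.summable_coe]
    exact (hasum.mul_of_nonneg hasum (fun k => norm_nonneg _) (fun k => norm_nonneg _)).congr
      (fun p => by simp)
  -- pointwise identity of integrands
  have hne1 : ∀ θ : ℝ, (1 - z * Complex.exp ((θ:ℂ) * Complex.I)) ≠ 0 := by
    intro θ h
    have : (1:ℂ) = z * Complex.exp ((θ:ℂ) * Complex.I) := by linear_combination h
    have := congrArg norm this
    rw [norm_one] at this
    exact absurd this.symm (ne_of_lt (hwlt θ))
  have habs : ∀ θ : ℝ, ‖g θ‖ = ‖1 - z * Complex.exp ((θ:ℂ) * Complex.I)‖ ^ (-α) := by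
    intro θ
    rw [hg, show -(α:ℂ) = ((-α : ℝ) : ℂ) from by push_cast; ring, Complex.norm_cpow_real]
  have hpt : ∀ θ : ℝ, ((1 / ‖1 - z * Complex.exp ((θ:ℂ) * Complex.I)‖ ^ (2*α) : ℝ) : ℂ)
      = g θ * (starRingEnd ℂ) (g θ) := by
    intro θ
    rw [Complex.mul_conj, Complex.normSq_eq_norm_sq, habs θ]
    congr 1
    have ht : (0:ℝ) < ‖1 - z * Complex.exp ((θ:ℂ) * Complex.I)‖ :=
      norm_pos_iff.2 (hne1 θ)
    rw [← Real.rpow_natCast (_ ^ (-α)) 2, ← Real.rpow_mul ht.le]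
    rw [show -α * (2:ℕ) = -(2*α) by push_cast; ring]
    rw [Real.rpow_neg ht.le, one_div]
  -- main computation
  have key : ((∫ θ in Set.Ioc (0:ℝ) (2*Real.pi),
        (1 / ‖1 - z * Complex.exp ((θ:ℂ) * Complex.I)‖ ^ (2*α) : ℝ)) : ℂ)
      = ∑' p : ℕ × ℕ, ∫ θ in Set.Ioc (0:ℝ) (2*Real.pi),
        (a p.1 * Complex.exp ((p.1:ℂ) * θ * Complex.I)) *
          (starRingEnd ℂ) (a p.2 * Complex.exp ((p.2:ℂ) * θ * Complex.I)) := by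
    rw [← MeasureTheory.integral_tsum hmeas hlint]
    refine integral_congr_ae (Filter.Eventually.of_forall fun θ => ?_)
    exact (hpt θ).trans (hFsum θ).tsum_eq.symm
  rw [tsum_congr hintF] at key
  -- compute the diagonal sum
  have hdiag : ∀ j : ℕ, a j * (starRingEnd ℂ) (a j) = ((c j ^ 2 * ‖z‖ ^ (2*j) : ℝ) : ℂ) := by
    intro j
    rw [Complex.mul_conj, Complex.normSq_eq_norm_sq]
    congr 1
    rw [hna j, mul_pow, ← pow_mul, mul_comm j 2]
  have hsum2 : Summable (fun p : ℕ × ℕ =>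
      if p.1 = p.2 then ((2*Real.pi : ℝ) : ℂ) * (a p.1 * (starRingEnd ℂ) (a p.1)) else 0) := by
    refine Summable.of_norm_bounded
      (g := fun p : ℕ × ℕ => (2*Real.pi) * (‖a p.1‖ * ‖a p.2‖))
      (((hasum.mul_of_nonneg hasum (fun k => norm_nonneg _) (fun k => norm_nonneg _)).mul_left
        (2*Real.pi)))
      ?_
    rintro ⟨j, k⟩
    dsimp only
    by_cases h : j = k
    · subst h
      simp only [if_pos rfl, eq_self_iff_true, if_true]
      refine le_of_eq ?_
      rw [norm_mul, norm_mul, RCLike.norm_conj, Complex.norm_real, Real.norm_eq_abs,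
        _root_.abs_of_nonneg h2π]
    · simp only [if_neg h, norm_zero]
      positivity
  rw [Summable.tsum_prod' hsum2 (fun j => ?_)] at key
  rotate_left
  · -- inner summability for fixed j : indicator function, finite support
    apply summable_of_finite_support
    apply Set.Finite.subset (Set.finite_singleton j)
    intro k hk
    simp only [Function.mem_support] at hk
    by_contra hkj
    simp only [Set.mem_singleton_iff] at hkj
    exact hk (by rw [if_neg (fun h => hkj h.symm)])
  have hinner : ∀ j : ℕ, (∑' k : ℕ,
      if j = k then ((2*Real.pi : ℝ) : ℂ) * (a j * (starRingEnd ℂ) (a j)) else 0)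
      = ((2*Real.pi * (c j ^ 2 * ‖z‖ ^ (2*j)) : ℝ) : ℂ) := by
    intro j
    have hsw : ∀ k' : ℕ, (if j = k' then ((2*Real.pi : ℝ) : ℂ) * (a j * (starRingEnd ℂ) (a j))
        else 0) = (if k' = j then ((2*Real.pi : ℝ) : ℂ) * (a j * (starRingEnd ℂ) (a j))
        else 0) := by
      intro k'
      by_cases h : k' = j
      · subst h; simp
      · rw [if_neg (fun hh => h hh.symm), if_neg h]
    rw [tsum_congr hsw, tsum_ite_eq j _, hdiag j]
    push_cast
    ring
  rw [tsum_congr hinner, ← Complex.ofReal_tsum] at key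
  have keyR : (∫ θ in Set.Ioc (0:ℝ) (2*Real.pi),
        (1 / ‖1 - z * Complex.exp ((θ:ℂ) * Complex.I)‖ ^ (2*α) : ℝ))
      = ∑' j : ℕ, 2*Real.pi * (c j ^ 2 * ‖z‖ ^ (2*j)) :=
    Complex.ofReal_injective ((integral_ofReal (𝕜 := ℂ)).symm.trans key)
  rw [intervalIntegral.integral_of_le h2π, keyR, tsum_mul_left]
  rw [← mul_assoc]
  rw [one_div, inv_mul_cancel₀ (by positivity : (2*Real.pi) ≠ 0), one_mul]
  exact tsum_congr fun k => by rw [hc]
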